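/- Let n be a positive integer, let b be an integer with 3 ≤ b ≤ n/2, and set t = n − b. Assume that for every integer p with 1 ≤ p < n and gcd(p, n) = 1 we have n/2 < p + (p·t mod n) < 3n/2. Then no integer p with n/(2(b−1)) < p ≤ n/b is coprime to n. (In particular, the interval (n/(2(b−1)), n/b] contains no integer relatively prime to n.) -/

import Mathlib

/-- If `t = n − b` with `3 ≤ b ≤ n/2` and the Kenyon–Smillie condition holds
(with `s = 1`), then the interval `(n/(2(b−1)), n/b]` contains no integer
coprime to `n`. -/
theorem no_coprime_in_interval (n b t : ℤ) (hn : 0 < n) (hb : 3 ≤ b)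
    (hbn : (b : ℚ) ≤ (n : ℚ) / 2) (ht : t = n - b)
    (h : ∀ p : ℤ, 1 ≤ p → p < n → Int.gcd p n = 1 →
      (n : ℚ) / 2 < (p : ℚ) + (((p * t) % n : ℤ) : ℚ) ∧
      (p : ℚ) + (((p * t) % n : ℤ) : ℚ) < 3 * n / 2) :
    ∀ p : ℤ, (n : ℚ) / (2 * (b - 1)) < (p : ℚ) → (p : ℚ) ≤ (n : ℚ) / b →
      Int.gcd p n ≠ 1 := by
  intro p hlo hhi hg
  have hbQ : (0:ℚ) < (b:ℚ) := by exact_mod_cast lt_of_lt_of_le (by norm_num) hb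
  have hb3Q : (3:ℚ) ≤ (b:ℚ) := by exact_mod_cast hb
  have hb1Q : (0:ℚ) < 2 * ((b:ℚ) - 1) := by linarith
  have hnQ : (0:ℚ) < (n:ℚ) := by exact_mod_cast hn
  -- 1 ≤ p
  have hp0 : (0:ℚ) < (p:ℚ) := lt_trans (by positivity) hlo
  have hp1 : 1 ≤ p := by exact_mod_cast hp0
  -- p*b ≤ n
  have hpb : p * b ≤ n := by
    have : (p:ℚ) * b ≤ n := by
      rw [le_div_iff₀ hbQ] at hhi; exact hhi
    exact_mod_cast this
  -- p*b < n : otherwise p*b = n, p ∣ n, gcd = 1 ⇒ p = 1, b = n, contradicting b ≤ n/2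
  have hpbn : p * b < n := by
    rcases lt_or_eq_of_le hpb with h' | h'
    · exact h'
    · exfalso
      have hpd : p ∣ n := ⟨b, h'.symm⟩
      have h1 : p ∣ (Int.gcd p n : ℤ) := Int.dvd_coe_gcd dvd_rfl hpd
      rw [hg] at h1
      have hp1' : p = 1 := by
        have := Int.le_of_dvd (by norm_num) h1
        omega
      subst hp1'
      simp at h'
      have : (b:ℚ) = n := by exact_mod_cast h'
      linarith
  have hpn : p < n := by nlinarith [hb, hp1, hpb]
  -- compute (p*t) % n
  have hkey : p * t = (p - 1) * n + (n - p * b) := by rw [ht]; ring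
  have hmod : (p * t) % n = n - p * b := by
    have h1 : 0 ≤ n - p * b := by omega
    have h2 : n - p * b < n := by nlinarith
    rw [hkey, add_comm, Int.add_mul_emod_self_right, Int.emod_eq_of_lt h1 h2]
  obtain ⟨hL, _⟩ := h p hp1 hpn hg
  rw [hmod] at hL
  push_cast at hL
  -- hL : n/2 < p + (n - p*b), i.e. p*(b-1) < n/2
  -- hlo : n/(2(b-1)) < p, i.e. n < 2(b-1)*p
  rw [div_lt_iff₀ hb1Q] at hlo
  rw [div_lt_iff₀ (by norm_num : (0:ℚ) < 2)] at hL
  nlinarith
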